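/- arXiv:2601.22067 — 2 statements merged into one kernel-verified Lean document; each statement's English description precedes it below -/
import Mathlib

section
/- Let P ⊆ ℙ(V) be an irreducible Coxeter polytope of negative type with data (α_s, v_s)_{s∈S} and lift Δ, and suppose Δ ⊆ Σ_{s∈S} ℝ_{≥0}·v_s. Then every nonempty proper face f of P of negative type satisfies Δ ∩ Span f ⊆ Σ_{s∈S_f^⊥} ℝ_{≥0}·v_s; in particular, f ⊆ ℙ(Σ_{s∈S_f^⊥} ℝ_{≥0}·v_s ∖ {0}). -/
/-!
Common definitions: Cartan matrices, Vinberg's Coxeter polytopes, faces,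
the Hilbert metric and Busemann (Hausdorff) measure, reflection groups,
Vinberg domains, proximal limit sets, joins.
-/

open scoped Classical LinearAlgebra.Projectivization Pointwise ENNReal
noncomputable section

/-- The quotient topology on a projective space. -/
instance projTop {K : Type*} [DivisionRing K] {V : Type*} [AddCommGroup V] [Module K V]
    [TopologicalSpace V] : TopologicalSpace (ℙ K V) :=
  inferInstanceAs (TopologicalSpace (Quotient (projectivizationSetoid K V)))

/-! ## Cartan matrices -/

/-- A Cartan matrix. -/
def IsCartanMatrix {S : Type*} (A : Matrix S S ℝ) : Prop :=
  (∀ s, A s s = 2) ∧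
  (∀ s t, s ≠ t → A s t ≤ 0) ∧
  (∀ s t, s ≠ t → (A s t = 0 ↔ A t s = 0)) ∧
  (∀ s t, s ≠ t →
    4 ≤ A s t * A t s ∨ ∃ k : ℕ, 2 ≤ k ∧ A s t * A t s = 4 * Real.cos (Real.pi / k) ^ 2)

/-- The graph on `S` with an edge `{s,t}` whenever `A s t ≠ 0` (`s ≠ t`). -/
def cartanGraph {S : Type*} (A : Matrix S S ℝ) : SimpleGraph S where
  Adj s t := s ≠ t ∧ (A s t ≠ 0 ∨ A t s ≠ 0)
  symm := ⟨fun _ _ h => ⟨h.1.symm, h.2.symm⟩⟩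
  loopless := ⟨fun _ h => h.1 rfl⟩

/-- The principal submatrix of `A` with rows and columns in `T`. -/
def submat {S : Type*} (A : Matrix S S ℝ) (T : Set S) : Matrix T T ℝ :=
  Matrix.of fun s t => A s t

/-- `T` is an irreducible component of `S` (for the matrix `A`): it is the
vertex set of a connected component of the graph of `A`. -/
def IsIrredComponent {S : Type*} (A : Matrix S S ℝ) (T : Set S) : Prop :=
  ∃ c : (cartanGraph A).ConnectedComponent, T = c.supp

/-- The spectral radius of a real matrix: the supremum of the moduli of its
complex eigenvalues. -/
def specRad {n : Type*} [Fintype n] [DecidableEq n] (M : Matrix n n ℝ) : ℝ :=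
  sSup {r : ℝ | ∃ μ : ℂ, (M.map fun a => (a : ℂ)).charpoly.IsRoot μ ∧ r = ‖μ‖}

/-- The Perron–Frobenius eigenvalue `λ_A = 2 - ρ(2·Id - A)` of a Cartan matrix. -/
def lambdaPF {n : Type*} [Fintype n] [DecidableEq n] (M : Matrix n n ℝ) : ℝ :=
  2 - specRad ((2 : ℝ) • (1 : Matrix n n ℝ) - M)

/-- A Cartan matrix is of positive type if all its irreducible components are. -/
def IsPosType {S : Type*} [Fintype S] (A : Matrix S S ℝ) : Prop :=
  ∀ T : Set S, IsIrredComponent A T → 0 < lambdaPF (submat A T)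

/-- A Cartan matrix is of zero type if all its irreducible components are. -/
def IsZeroType {S : Type*} [Fintype S] (A : Matrix S S ℝ) : Prop :=
  ∀ T : Set S, IsIrredComponent A T → lambdaPF (submat A T) = 0

/-- A Cartan matrix is of negative type if all its irreducible components are. -/
def IsNegType {S : Type*} [Fintype S] (A : Matrix S S ℝ) : Prop :=
  ∀ T : Set S, IsIrredComponent A T → lambdaPF (submat A T) < 0

/-- `T^⊥ = {s | A s t = 0 for all t ∈ T}`. -/
def perpSet {S : Type*} (A : Matrix S S ℝ) (T : Set S) : Set S :=
  {s | ∀ t ∈ T, A s t = 0}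

/-- The union of those irreducible components `U` of `T` whose
Perron-Frobenius eigenvalue satisfies the predicate `p`. -/
def partOf {S : Type*} [Fintype S] (A : Matrix S S ℝ) (T : Set S) (p : ℝ → Prop) : Set S :=
  {s | ∃ h : s ∈ T, ∃ U : Set T, IsIrredComponent (submat A T) U ∧ (⟨s, h⟩ : T) ∈ U ∧
    p (lambdaPF (submat (submat A T) U))}

/-! ## Projective geometry -/

variable {V : Type*} [NormedAddCommGroup V] [NormedSpace ℝ V]

/-- The image of a set `C ⊆ V` in projective space. -/
def projSet (C : Set V) : Set (ℙ ℝ V) :=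
  {p | ∃ w ∈ C, ∃ hw : w ≠ 0, Projectivization.mk ℝ w hw = p}

/-- An open projective segment with endpoints `[a]` and `[b]`. -/
def openProjSeg (a b : V) : Set (ℙ ℝ V) :=
  {p | ∃ u t : ℝ, 0 < u ∧ 0 < t ∧ ∃ h : u • a + t • b ≠ 0, Projectivization.mk ℝ _ h = p}

/-- `x ∼ y` iff `x = y` or some open projective segment contained in `P` contains both. -/
def faceRel (P : Set (ℙ ℝ V)) (x y : ℙ ℝ V) : Prop :=
  x = y ∨ ∃ a b : V, a ≠ 0 ∧ b ≠ 0 ∧ openProjSeg a b ⊆ P ∧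
    x ∈ openProjSeg a b ∧ y ∈ openProjSeg a b

/-- The faces of `P` are the equivalence classes of `faceRel`. -/
def IsFace (P f : Set (ℙ ℝ V)) : Prop :=
  ∃ x ∈ P, f = {y | y ∈ P ∧ faceRel P x y}

/-- The linear span of the cone over a subset of projective space. -/
def spanFace (f : Set (ℙ ℝ V)) : Submodule ℝ V :=
  Submodule.span ℝ {w : V | ∃ hw : w ≠ 0, Projectivization.mk ℝ w hw ∈ f}

/-- `F` is a facet (codimension-one face) of the closed convex set `K`. -/
def IsFacet (K F : Set (ℙ ℝ V)) : Prop :=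
  ∃ g, IsFace K g ∧ Module.finrank ℝ (spanFace g) + 1 = Module.finrank ℝ (spanFace K) ∧
    F = closure g

/-- The affine chart of `ℙ(V)` associated with a linear functional `ξ`: a point `x` is sent
to the representative `w` of `x` with `ξ w = 1` (junk if the line `x` lies in `ker ξ`). -/
def chartMap (ξ : V →ₗ[ℝ] ℝ) (x : ℙ ℝ V) : V :=
  (ξ x.rep)⁻¹ • x.rep

/-- The convex hull of a set `X ⊆ ℙ(V)`, computed in the affine chart of `ξ`. -/
def convexHullIn (ξ : V →ₗ[ℝ] ℝ) (X : Set (ℙ ℝ V))  : Set (ℙ ℝ V) :=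
  projSet (convexHull ℝ (chartMap ξ '' X) \ {0})

/-- `ξ` defines an affine chart whose complementary hyperplane misses `Y`. -/
def ChartFor (ξ : V →ₗ[ℝ] ℝ) (Y : Set (ℙ ℝ V)) : Prop :=
  ∀ x ∈ Y, ξ (Projectivization.rep x) ≠ 0

/-- A sharp open convex cone. -/
def IsPCCone {W : Type*} [NormedAddCommGroup W] [NormedSpace ℝ W] (C : Set W) : Prop :=
  IsOpen C ∧ Convex ℝ C ∧ C.Nonempty ∧ (∀ c : ℝ, 0 < c → ∀ x ∈ C, c • x ∈ C) ∧
    ∀ x : W, x ≠ 0 → ¬(x ∈ closure C ∧ -x ∈ closure C)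

/-- A properly convex domain in `ℙ(V)`. -/
def IsPCDomain (Ω : Set (ℙ ℝ V)) : Prop :=
  ∃ C : Set V, IsPCCone C ∧ Ω = projSet (C \ {0})

/-! ## Hilbert metric and Busemann measure -/

/-- The Hilbert distance on a properly convex domain `Ω`: the projective line through
`x ≠ y` is parametrized by `t ↦ [(1-t)·x̄ + t·ȳ]`; the intersection with `Ω` is the
interval `(sInf T, sSup T) ∋ 0, 1`, and `d(x,y) = ½ log [x':x:y:y']` for the
corresponding boundary points (the factor of an endpoint at infinity being `1`). -/
def hilbertDist (Ω : Set (ℙ ℝ V)) (x y : ℙ ℝ V) : ℝ :=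
  if x = y then 0
  else
    (1 / 2) *
      Real.log
        ((if BddBelow {t : ℝ | ∃ h : (1 - t) • x.rep + t • y.rep ≠ 0,
              Projectivization.mk ℝ _ h ∈ Ω} then
            (1 - sInf {t : ℝ | ∃ h : (1 - t) • x.rep + t • y.rep ≠ 0,
              Projectivization.mk ℝ _ h ∈ Ω}) /
            (0 - sInf {t : ℝ | ∃ h : (1 - t) • x.rep + t • y.rep ≠ 0,
              Projectivization.mk ℝ _ h ∈ Ω})
          else 1) *
         (if BddAbove {t : ℝ | ∃ h : (1 - t) • x.rep + t • y.rep ≠ 0,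
              Projectivization.mk ℝ _ h ∈ Ω} then
            sSup {t : ℝ | ∃ h : (1 - t) • x.rep + t • y.rep ≠ 0,
              Projectivization.mk ℝ _ h ∈ Ω} /
            (sSup {t : ℝ | ∃ h : (1 - t) • x.rep + t • y.rep ≠ 0,
              Projectivization.mk ℝ _ h ∈ Ω} - 1)
          else 1))

/-- The diameter of a set for a distance function. -/
def ediamWith {X : Type*} (ρ : X → X → ℝ) (U : Set X) : ℝ≥0∞ :=
  ⨆ p ∈ U, ⨆ q ∈ U, ENNReal.ofReal (ρ p q)

/-- The `d`-dimensional Hausdorff measure of `A` for the distance function `ρ`. -/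
def hausdorffWith {X : Type*} (ρ : X → X → ℝ) (d : ℕ) (A : Set X) : ℝ≥0∞ :=
  ⨆ (δ : ℝ≥0∞) (_ : 0 < δ),
    ⨅ (U : ℕ → Set X) (_ : A ⊆ ⋃ n, U n) (_ : ∀ n, ediamWith ρ (U n) ≤ δ),
      ∑' n, ediamWith ρ (U n) ^ d

/-- The Busemann measure of `A ∩ Ω`: the `d`-dimensional Hausdorff measure of `A ∩ Ω` in
the metric space `(Ω, d_Ω)`, where `d = dim ℙ(V) = dim V - 1`. -/
def busemann (Ω : Set (ℙ ℝ V)) (A : Set (ℙ ℝ V)) : ℝ≥0∞ :=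
  hausdorffWith (fun p q : ↥Ω => hilbertDist Ω ↑p ↑q) (Module.finrank ℝ V - 1)
    {p : ↥Ω | ↑p ∈ A}

/-! ## Linear actions on projective space, proximality -/

theorem unit_inj (g : (V →ₗ[ℝ] V)ˣ) : Function.Injective (g : V →ₗ[ℝ] V) := by
  intro x y h
  have h2 : ((g⁻¹ : (V →ₗ[ℝ] V)ˣ) : V →ₗ[ℝ] V) (((g : (V →ₗ[ℝ] V)ˣ) : V →ₗ[ℝ] V) x)
      = ((g⁻¹ : (V →ₗ[ℝ] V)ˣ) : V →ₗ[ℝ] V) (((g : (V →ₗ[ℝ] V)ˣ) : V →ₗ[ℝ] V) y) := by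
    rw [h]
  rw [← Module.End.mul_apply, ← Module.End.mul_apply, ← Units.val_mul, inv_mul_cancel] at h2
  simpa using h2

/-- The projective action of an invertible linear map. -/
def pAct (g : (V →ₗ[ℝ] V)ˣ) : ℙ ℝ V → ℙ ℝ V :=
  Projectivization.map (g : V →ₗ[ℝ] V) (unit_inj g)

/-- `g` is proximal with top eigenvalue `lam`: `lam` is a real eigenvalue of algebraic
multiplicity one whose modulus is the maximum of the moduli of the complex eigenvalues. -/
def IsProximalUnit [FiniteDimensional ℝ V] (g : (V →ₗ[ℝ] V)ˣ) (lam : ℝ) : Prop :=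
  ((g : V →ₗ[ℝ] V)).charpoly.rootMultiplicity lam = 1 ∧
    ∀ μ : ℂ, (((g : V →ₗ[ℝ] V)).charpoly.map (algebraMap ℝ ℂ)).IsRoot μ → ‖μ‖ ≤ |lam|

/-- The proximal limit set of a subgroup `Γ ≤ GL(V)`: the closure of the set of attracting
fixed points of the proximal elements of `Γ`. -/
def limitSet [FiniteDimensional ℝ V] (Γ : Subgroup (V →ₗ[ℝ] V)ˣ) : Set (ℙ ℝ V) :=
  closure {p | ∃ g ∈ Γ, ∃ lam : ℝ, IsProximalUnit g lam ∧
    ∃ w : V, ∃ hw : w ≠ 0, (g : V →ₗ[ℝ] V) w = lam • w ∧ Projectivization.mk ℝ w hw = p}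

/-- A subgroup is large if it has a finite-index subgroup that surjects onto a
nonabelian free group. -/
def IsLarge {G : Type*} [Group G] (Γ : Subgroup G) : Prop :=
  ∃ H : Subgroup ↥Γ, H.FiniteIndex ∧ ∃ φ : ↥H →* FreeGroup (Fin 2), Function.Surjective φ

/-! ## Coxeter polytopes -/

/-- A Coxeter polytope: a projective polytope `ℙ(Δ ∖ {0})`, where
`Δ = ⋂ₛ {α_s ≤ 0}` is a sharp polyhedral cone with nonempty interior, each `α_s`
defines a facet of it (facets being distinct for distinct `s`), together with polars
`v_s` such that `α_s (v_s) = 2` and `(α_s (v_t))_{s,t}` is a Cartan matrix. -/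
structure CoxPolytope (S : Type*) (V : Type*) [NormedAddCommGroup V] [NormedSpace ℝ V] where
  α : S → V →ₗ[ℝ] ℝ
  v : S → V
  pairing : ∀ s, α s (v s) = 2
  cartan : IsCartanMatrix (Matrix.of fun s t => α s (v t))
  int_nonempty : (interior (⋂ s, {x : V | α s x ≤ 0})).Nonempty
  sharp : ∀ x : V, x ≠ 0 → x ∈ ⋂ s, {x : V | α s x ≤ 0} → -x ∉ ⋂ s, {x : V | α s x ≤ 0}
  facet : ∀ s, ∃ x : V, α s x = 0 ∧ ∀ t, t ≠ s → α t x < 0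

namespace CoxPolytope

variable {S : Type*} (CP : CoxPolytope S V)

/-- The Cartan matrix `A_P` of a Coxeter polytope. -/
def A : Matrix S S ℝ := Matrix.of fun s t => CP.α s (CP.v t)

/-- The fundamental cone `Δ`. -/
def Δ : Set V := ⋂ s, {x : V | CP.α s x ≤ 0}

/-- The polytope `P = ℙ(Δ ∖ {0}) ⊆ ℙ(V)`. -/
def poly : Set (ℙ ℝ V) := projSet (CP.Δ \ {0})

/-- The reflection `σ_s = Id - α_s ⊗ v_s`. -/
def refl (s : S) : V →ₗ[ℝ] V := LinearMap.id - (CP.α s).smulRight (CP.v s)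

/-- The reflection group `Γ_P ≤ GL(V)` generated by the reflections. -/
def reflGroup : Subgroup (V →ₗ[ℝ] V)ˣ :=
  Subgroup.closure {g | ∃ s, (g : V →ₗ[ℝ] V) = CP.refl s}

/-- The Vinberg domain `Ω_P = Int (⋃_{γ ∈ Γ_P} γ·P)`. -/
def vinbergDomain : Set (ℙ ℝ V) :=
  interior (⋃ γ ∈ CP.reflGroup, pAct γ '' CP.poly)

/-- `S_f = {s ∈ S | f ⊆ ℙ(ker α_s)}`. -/
def SfaceSet (f : Set (ℙ ℝ V)) : Set S :=
  {s | ∀ w : V, ∀ hw : w ≠ 0, Projectivization.mk ℝ w hw ∈ f → CP.α s w = 0}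

/-- The Cartan matrix `A_{S_f}` of a face. -/
def faceMatrix (f : Set (ℙ ℝ V)) : Matrix (CP.SfaceSet f) (CP.SfaceSet f) ℝ :=
  submat CP.A (CP.SfaceSet f)

variable [Fintype S]

/-- A face is elliptic if `A_{S_f}` is of positive type. -/
def FaceElliptic (f : Set (ℙ ℝ V)) : Prop := IsPosType (CP.faceMatrix f)

/-- A face is of zero type if `A_{S_f}` is of zero type. -/
def FaceZero (f : Set (ℙ ℝ V)) : Prop := IsZeroType (CP.faceMatrix f)

/-- A face is of negative type if `A_{S_f}` is of negative type. -/
def FaceNeg (f : Set (ℙ ℝ V)) : Prop := IsNegType (CP.faceMatrix f)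

/-- A face is parabolic if `A_{S_f}` is of zero type of rank `dim V - dim (Span f) - 1`. -/
def FaceParabolic (f : Set (ℙ ℝ V)) : Prop :=
  IsZeroType (CP.faceMatrix f) ∧
    (CP.faceMatrix f).rank + Module.finrank ℝ (spanFace f) + 1 = Module.finrank ℝ V

/-- A Coxeter polytope is quasiperfect if every vertex is elliptic or parabolic. -/
def Quasiperfect : Prop :=
  ∀ f : Set (ℙ ℝ V), IsFace CP.poly f → Module.finrank ℝ (spanFace f) = 1 →
    CP.FaceElliptic f ∨ CP.FaceParabolic f

/-- A boundary face: a nonempty face of `P` contained in `∂Ω_P`. -/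
def BoundaryFace (f : Set (ℙ ℝ V)) : Prop :=
  IsFace CP.poly f ∧ f.Nonempty ∧ f ⊆ frontier CP.vinbergDomain

/-- A maximal boundary face. -/
def MaxBoundaryFace (f : Set (ℙ ℝ V)) : Prop :=
  CP.BoundaryFace f ∧ ∀ g, CP.BoundaryFace g → closure f ⊆ closure g → g = f

/-- A face `f` is perfect if every face `g` with `f ⊆ closure g` of dimension
`dim f + 1` is elliptic. -/
def PerfectFace (f : Set (ℙ ℝ V)) : Prop :=
  ∀ g, IsFace CP.poly g → f ⊆ closure g →
    Module.finrank ℝ (spanFace g) = Module.finrank ℝ (spanFace f) + 1 → CP.FaceElliptic g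

/-- A face is irreducible loxodromic if `A_{S_f}` is irreducible of negative type
and `rank A_{S_f} = dim V - dim (Span f)`. -/
def IrredLoxFace (f : Set (ℙ ℝ V)) : Prop :=
  (cartanGraph (CP.faceMatrix f)).Connected ∧ IsNegType (CP.faceMatrix f) ∧
    (CP.faceMatrix f).rank + Module.finrank ℝ (spanFace f) = Module.finrank ℝ V

/-- The cone `Σ_{s ∈ T} ℝ_{≥0}·v_s`. -/
def nonnegCone (T : Set S) : Set V :=
  {x | ∃ c : S → ℝ, (∀ s, 0 ≤ c s) ∧ (∀ s, s ∉ T → c s = 0) ∧ x = ∑ s, c s • CP.v s}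

/-- A minimal face of negative type. -/
def MinNegFace (f : Set (ℙ ℝ V)) : Prop :=
  IsFace CP.poly f ∧ f.Nonempty ∧ f ≠ interior CP.poly ∧ CP.FaceNeg f ∧
    ∀ g : Set (ℙ ℝ V), IsFace CP.poly g → g.Nonempty → closure g ⊂ closure f → ¬CP.FaceNeg g

/-- A face `f` is the join of the faces `F i`: the spans of the `F i` are independent
with sum `Span f`, and `Δ ∩ Span f = Σᵢ (Δ ∩ Span (F i))`. -/
def FaceIsJoin (f : Set (ℙ ℝ V)) {k : ℕ} (F : Fin k → Set (ℙ ℝ V)) : Prop :=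
  (∀ y : Fin k → V, (∀ i, y i ∈ spanFace (F i)) → (∑ i, y i) = 0 → ∀ i, y i = 0) ∧
  (⨆ i, spanFace (F i)) = spanFace f ∧
  CP.Δ ∩ (spanFace f : Set V) =
    {x | ∃ y : Fin k → V, (∀ i, y i ∈ CP.Δ ∩ (spanFace (F i) : Set V)) ∧ x = ∑ i, y i}

/-- A subset `S'` of `S` defines a face of `P`. -/
def DefinesFace (S' : Set S) : Prop :=
  ∃ x : V, (∀ s ∈ S', CP.α s x = 0) ∧ ∀ s ∉ S', CP.α s x < 0

end CoxPolytope

/-- `CP` is the join of the Coxeter polytopes `Q i ⊆ ℙ(W i)` along the decompositions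
`V = ⊕ᵢ W i` and `S = ⊔ᵢ (fibers of c)`. -/
def IsJoinData {S : Type*} {V : Type*} [NormedAddCommGroup V] [NormedSpace ℝ V]
    (CP : CoxPolytope S V) {k : ℕ} (W : Fin k → Submodule ℝ V) (c : S → Fin k)
    (Q : ∀ i : Fin k, CoxPolytope {s : S // c s = i} ↥(W i)) : Prop :=
  (∀ x : V, ∃ y : Fin k → V, (∀ i, y i ∈ W i) ∧ x = ∑ i, y i) ∧
  (∀ y : Fin k → V, (∀ i, y i ∈ W i) → (∑ i, y i) = 0 → ∀ i, y i = 0) ∧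
  (∀ s : S, CP.v s ∈ W (c s)) ∧
  (∀ s : S, ∀ i : Fin k, i ≠ c s → ∀ x : V, x ∈ W i → CP.α s x = 0) ∧
  (∀ i : Fin k, ∀ s : {s : S // c s = i},
    (∀ x : ↥(W i), (Q i).α s x = CP.α s.1 x) ∧ ((Q i).v s : V) = CP.v s.1)

/-- `Ω` is a join of the properly convex domains `Ω₁ ⊆ ℙ(E₁)` and `Ω₂ ⊆ ℙ(E₂)`. -/
def IsJoinOfDomains {V : Type*} [NormedAddCommGroup V] [NormedSpace ℝ V]
    (E₁ E₂ : Submodule ℝ V) (Ω₁ : Set (ℙ ℝ ↥E₁)) (Ω₂ : Set (ℙ ℝ ↥E₂))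
    (Ω : Set (ℙ ℝ V)) : Prop :=
  ∃ (C₁ : Set ↥E₁) (C₂ : Set ↥E₂), IsPCCone C₁ ∧ IsPCCone C₂ ∧
    Ω₁ = projSet (C₁ \ {0}) ∧ Ω₂ = projSet (C₂ \ {0}) ∧
    ∃ ε₁ ε₂ : Bool,
      Ω = projSet ({x : V | ∃ c₁ ∈ C₁, ∃ c₂ ∈ C₂,
        x = (cond ε₁ 1 (-1) : ℝ) • (c₁ : V) + (cond ε₂ 1 (-1) : ℝ) • (c₂ : V)} \ {0})

end


section Aux

/-- Propagate a property along a walk in a graph. -/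
lemma prop_along_walk {n : Type*} {G : SimpleGraph n} {P : n → Prop}
    (hP : ∀ u v, G.Adj u v → P u → P v) :
    ∀ {u v : n} (_ : G.Walk u v), P u → P v := by
  intro u v p
  induction p with
  | nil => exact id
  | cons hadj q ih => exact fun hu => ih (hP _ _ hadj hu)

/-- Gershgorin-type bound: if `M` is entrywise nonnegative and `M b ≤ 2 b` for a positive
vector `b`, then every complex eigenvalue of `M` has modulus at most `2`, hence
`specRad M ≤ 2`. -/
lemma specRad_le_two_of_mulVec_le {n : Type*} [Fintype n] [DecidableEq n] [Nonempty n]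
    (M : Matrix n n ℝ) (hM : ∀ i j, 0 ≤ M i j)
    (b : n → ℝ) (hb : ∀ i, 0 < b i) (hMb : ∀ i, M.mulVec b i ≤ 2 * b i) :
    specRad M ≤ 2 := by
  apply Real.sSup_le _ (by norm_num)
  rintro r ⟨μ, hroot, rfl⟩
  set Mc : Matrix n n ℂ := M.map (fun a => (a : ℂ)) with hMc
  -- from the characteristic polynomial root, get an eigenvector
  have h1 : ((Matrix.charmatrix Mc).map (Polynomial.evalRingHom μ)).det = 0 := by
    have h := RingHom.map_det (Polynomial.evalRingHom μ) (Matrix.charmatrix Mc)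
    rw [RingHom.mapMatrix_apply] at h
    rw [← h]
    exact hroot
  have h2 : (Matrix.charmatrix Mc).map (Polynomial.evalRingHom μ) = μ • (1 : Matrix n n ℂ) - Mc := by
    ext i j
    by_cases hij : i = j
    · subst hij
      simp [Matrix.map_apply, Matrix.charmatrix_apply_eq, Matrix.sub_apply, Matrix.smul_apply,
        Matrix.one_apply_eq]
    · simp [Matrix.map_apply, Matrix.charmatrix_apply_ne _ _ _ hij, Matrix.sub_apply,
        Matrix.smul_apply, Matrix.one_apply_ne hij]
  rw [h2] at h1
  obtain ⟨z, hz0, hzv⟩ := Matrix.exists_mulVec_eq_zero_iff.mpr h1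
  have heig : Mc.mulVec z = μ • z := by
    rw [Matrix.sub_mulVec, sub_eq_zero] at hzv
    rw [← hzv, Matrix.smul_mulVec, Matrix.one_mulVec]
  -- pick the index maximizing `|z i| / b i`
  obtain ⟨t, -, ht⟩ := Finset.univ.exists_max_image (fun i => ‖z i‖ / b i)
    Finset.univ_nonempty
  have hzt : 0 < ‖z t‖ := by
    rcases (norm_nonneg (z t)).lt_or_eq with h | h
    · exact h
    exfalso; apply hz0; funext i
    have hi := ht i (Finset.mem_univ i)
    rw [← h, zero_div] at hi
    have hnn : 0 ≤ ‖z i‖ / b i := div_nonneg (norm_nonneg _) (hb i).le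
    have hzi : ‖z i‖ / b i = 0 := le_antisymm hi hnn
    field_simp [(hb i).ne'] at hzi
    simpa using hzi
  have hkey : ∀ s, ‖z s‖ ≤ b s * (‖z t‖ / b t) := by
    intro s
    have := ht s (Finset.mem_univ s)
    have h' := (div_le_iff₀ (hb s)).mp this
    linarith [h']
  have hmain : ‖μ‖ * ‖z t‖ ≤ 2 * ‖z t‖ := by
    have e1 : ‖μ‖ * ‖z t‖ = ‖Mc.mulVec z t‖ := by
      rw [heig]; simp [Pi.smul_apply, smul_eq_mul, norm_mul]
    have e2 : Mc.mulVec z t = ∑ s, (M t s : ℂ) * z s := by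
      simp [Matrix.mulVec, dotProduct, hMc, Matrix.map_apply]
    calc ‖μ‖ * ‖z t‖ = ‖Mc.mulVec z t‖ := e1
      _ = ‖∑ s, (M t s : ℂ) * z s‖ := by rw [e2]
      _ ≤ ∑ s, ‖(M t s : ℂ) * z s‖ := norm_sum_le _ _
      _ = ∑ s, M t s * ‖z s‖ := by
          refine Finset.sum_congr rfl fun s _ => ?_
          rw [norm_mul, Complex.norm_real, Real.norm_eq_abs, abs_of_nonneg (hM t s)]
      _ ≤ ∑ s, M t s * (b s * (‖z t‖ / b t)) := by
          refine Finset.sum_le_sum fun s _ => ?_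
          exact mul_le_mul_of_nonneg_left (hkey s) (hM t s)
      _ = M.mulVec b t * (‖z t‖ / b t) := by
          have hmb : M.mulVec b t = ∑ s, M t s * b s := by
            simp [Matrix.mulVec, dotProduct]
          rw [hmb, Finset.sum_mul]
          exact Finset.sum_congr rfl fun s _ => by ring
      _ ≤ (2 * b t) * (‖z t‖ / b t) := by
          refine mul_le_mul_of_nonneg_right (hMb t) ?_
          exact div_nonneg (norm_nonneg _) (hb t).le
      _ = 2 * ‖z t‖ := by
          field_simp [(hb t).ne']
  exact le_of_mul_le_mul_right hmain hzt

/-- Perron-Frobenius-type lemma: if `B` is a "Cartan-like" matrix whose graph is connected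
and there is a nonzero nonnegative vector `b` with `B b ≥ 0`, then `lambdaPF B ≥ 0`. -/
lemma lambdaPF_nonneg_of_mulVec_nonneg {n : Type*} [Fintype n] [DecidableEq n]
    (B : Matrix n n ℝ) (hdiag : ∀ i, B i i = 2)
    (hoff : ∀ i j, i ≠ j → B i j ≤ 0)
    (hsym : ∀ i j, i ≠ j → (B i j = 0 ↔ B j i = 0))
    (hconn : (cartanGraph B).Connected)
    (b : n → ℝ) (hb0 : ∀ i, 0 ≤ b i) (i₀ : n) (hi₀ : 0 < b i₀)
    (hBb : ∀ i, 0 ≤ B.mulVec b i) :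
    0 ≤ lambdaPF B := by
  have hne : Nonempty n := ⟨i₀⟩
  have hzero : ∀ w, b w = 0 → ∀ u, (cartanGraph B).Adj u w → b u = 0 := by
    intro w hw u hadj
    have hterm : ∀ s ∈ Finset.univ, B w s * b s ≤ (0 : ℝ) := by
      intro s _
      by_cases hsw : s = w
      · subst hsw; simp [hw]
      · exact mul_nonpos_of_nonpos_of_nonneg (hoff w s (Ne.symm hsw)) (hb0 s)
    have hBbw : B.mulVec b w = ∑ s, B w s * b s := by
      simp [Matrix.mulVec, dotProduct]
    have hsum0 : ∑ s, B w s * b s = 0 := by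
      refine le_antisymm (Finset.sum_nonpos hterm) ?_
      rw [← hBbw]; exact hBb w
    have hu0 := (Finset.sum_eq_zero_iff_of_nonpos hterm).mp hsum0 u (Finset.mem_univ u)
    have hBwu : B w u ≠ 0 := by
      rcases hadj.2 with h | h
      · exact fun h0 => h ((hsym u w hadj.1).mpr h0)
      · exact h
    rcases mul_eq_zero.mp hu0 with h | h
    · exact absurd h hBwu
    · exact h
  have hpos : ∀ i, 0 < b i := by
    intro i
    rcases (hb0 i).lt_or_eq with h | h
    · exact h
    exfalso
    obtain ⟨p⟩ := hconn.preconnected i i₀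
    have h0 : b i₀ = 0 :=
      prop_along_walk (fun u v hadj hu => hzero u hu v hadj.symm) p h.symm
    linarith
  have hspec : specRad ((2 : ℝ) • (1 : Matrix n n ℝ) - B) ≤ 2 := by
    apply specRad_le_two_of_mulVec_le
    · intro i j
      by_cases hij : i = j
      · subst hij
        simp [Matrix.sub_apply, Matrix.smul_apply, Matrix.one_apply_eq, hdiag i]
      · have := hoff i j hij
        simp [Matrix.sub_apply, Matrix.smul_apply, Matrix.one_apply_ne hij]
        linarith
    · exact hpos
    · intro i
      have he : ((2 : ℝ) • (1 : Matrix n n ℝ) - B).mulVec b i = 2 * b i - B.mulVec b i := by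
        rw [Matrix.sub_mulVec, Matrix.smul_mulVec, Matrix.one_mulVec]
        simp [Pi.sub_apply, Pi.smul_apply, smul_eq_mul]
      rw [he]
      linarith [hBb i]
  unfold lambdaPF
  linarith

/-- The restriction of the Cartan graph to a connected component is connected. -/
lemma cartanGraph_submat_supp_connected {T : Type*} (B : Matrix T T ℝ)
    (c : (cartanGraph B).ConnectedComponent) :
    (cartanGraph (submat B c.supp)).Connected := by
  obtain ⟨v, hv⟩ := c.exists_rep
  have hvmem : v ∈ c.supp := (SimpleGraph.ConnectedComponent.mem_supp_iff _ _).mpr hv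
  have hne : Nonempty ↥c.supp := ⟨⟨v, hvmem⟩⟩
  have H : ∀ (a bb : T) (_ : (cartanGraph B).Walk a bb) (ha : a ∈ c.supp) (hb : bb ∈ c.supp),
      (cartanGraph (submat B c.supp)).Reachable ⟨a, ha⟩ ⟨bb, hb⟩ := by
    intro a bb p
    induction p with
    | nil => intro ha hb; exact SimpleGraph.Reachable.refl _
    | @cons a m bb hadj q ih =>
      intro ha hb
      have hm : m ∈ c.supp :=
        (SimpleGraph.ConnectedComponent.mem_supp_iff _ _).mpr
          ((SimpleGraph.ConnectedComponent.sound hadj.symm.reachable).trans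
            ((SimpleGraph.ConnectedComponent.mem_supp_iff _ _).mp ha))
      have hadj' : (cartanGraph (submat B c.supp)).Adj ⟨a, ha⟩ ⟨m, hm⟩ :=
        ⟨fun h => hadj.ne (congrArg Subtype.val h), hadj.2⟩
      exact hadj'.reachable.trans (ih hm hb)
  refine ⟨?_⟩
  rintro ⟨u, hu⟩ ⟨w, hw⟩
  obtain ⟨p⟩ := SimpleGraph.ConnectedComponent.exact
    (((SimpleGraph.ConnectedComponent.mem_supp_iff _ _).mp hu).trans
      ((SimpleGraph.ConnectedComponent.mem_supp_iff _ _).mp hw).symm)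
  exact H u w p hu hw

end Aux

/-- **Claim.** Let `P ⊆ ℙ(V)` be an irreducible Coxeter polytope of negative type with
`Δ ⊆ Σ_{s∈S} ℝ_{≥0}·v_s`. Then every nonempty proper face `f` of `P` of negative type
satisfies `Δ ∩ Span f ⊆ Σ_{s ∈ S_f^⊥} ℝ_{≥0}·v_s`; in particular
`f ⊆ ℙ(Σ_{s ∈ S_f^⊥} ℝ_{≥0}·v_s ∖ {0})`. -/
theorem statement_13 {S : Type} [Fintype S] [DecidableEq S] [Nonempty S]
    {V : Type} [NormedAddCommGroup V] [NormedSpace ℝ V] [FiniteDimensional ℝ V]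
    (hdim : 2 ≤ Module.finrank ℝ V)
    (CP : CoxPolytope S V) (hirr : (cartanGraph CP.A).Connected) (hneg : IsNegType CP.A)
    (hΔ : CP.Δ ⊆ CP.nonnegCone Set.univ)
    (f : Set (ℙ ℝ V)) (hf : IsFace CP.poly f) (hfne : f.Nonempty)
    (hfp : f ≠ interior CP.poly) (hfneg : CP.FaceNeg f) :
    CP.Δ ∩ (spanFace f : Set V) ⊆ CP.nonnegCone (perpSet CP.A (CP.SfaceSet f)) ∧
      f ⊆ projSet (CP.nonnegCone (perpSet CP.A (CP.SfaceSet f)) \ {0}) := by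
  classical
  obtain ⟨hA2, hAle, hAsym, -⟩ := CP.cartan
  have main : CP.Δ ∩ (spanFace f : Set V) ⊆ CP.nonnegCone (perpSet CP.A (CP.SfaceSet f)) := by
    rintro x ⟨hxΔ, hxspan⟩
    obtain ⟨c, hc0, -, hxc⟩ := hΔ hxΔ
    have hxspan' : x ∈ spanFace f := hxspan
    have hstepB : ∀ t, t ∈ CP.SfaceSet f → ∑ s, CP.A t s * c s = 0 := by
      intro t ht
      have hker : CP.α t x = 0 := by
        have hle : spanFace f ≤ LinearMap.ker (CP.α t) := by
          apply Submodule.span_le.mpr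
          rintro w ⟨hw0, hwf⟩
          exact LinearMap.mem_ker.mpr (ht w hw0 hwf)
        exact LinearMap.mem_ker.mp (hle hxspan')
      have hexp : CP.α t x = ∑ s, CP.A t s * c s := by
        rw [hxc, map_sum]
        refine Finset.sum_congr rfl fun s _ => ?_
        show CP.α t (c s • CP.v s) = CP.α t (CP.v s) * c s
        rw [map_smul, smul_eq_mul, mul_comm]
      rw [← hexp]; exact hker
    have hstepC : ∀ t, t ∈ CP.SfaceSet f → c t = 0 := by
      by_contra hcon
      push_neg at hcon
      obtain ⟨t₀, ht₀T, ht₀⟩ := hcon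
      have ht₀pos : 0 < c t₀ := (hc0 t₀).lt_of_ne (Ne.symm ht₀)
      set G := cartanGraph (CP.faceMatrix f) with hG
      set cc := G.connectedComponentMk ⟨t₀, ht₀T⟩ with hcc
      set U : Set ↥(CP.SfaceSet f) := cc.supp with hU
      have ht₀U : (⟨t₀, ht₀T⟩ : ↥(CP.SfaceSet f)) ∈ U :=
        (SimpleGraph.ConnectedComponent.mem_supp_iff _ _).mpr rfl
      have hUneg := hfneg U ⟨cc, rfl⟩
      have hU0 : (0 : ℝ) ≤ lambdaPF (submat (CP.faceMatrix f) U) := by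
        refine lambdaPF_nonneg_of_mulVec_nonneg _ (fun u => CP.pairing u.1.1)
          (fun u w huw => hAle u.1.1 w.1.1 (fun h => huw (Subtype.ext (Subtype.ext h))))
          (fun u w huw => hAsym u.1.1 w.1.1 (fun h => huw (Subtype.ext (Subtype.ext h))))
          (cartanGraph_submat_supp_connected _ cc)
          (fun u => c u.1.1) (fun u => hc0 u.1.1) ⟨⟨t₀, ht₀T⟩, ht₀U⟩ ht₀pos ?_
        intro u
        set g : S → ℝ := fun s => CP.A u.1.1 s * c s with hg
        have hsumg : ∑ s, g s = 0 := hstepB u.1.1 u.1.2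
        have hmv : (submat (CP.faceMatrix f) U).mulVec (fun w => c w.1.1) u
            = ∑ w : ↥U, g w.1.1 := by
          simp [Matrix.mulVec, dotProduct, hg, submat, CoxPolytope.faceMatrix]
        set e : ↥U → S := fun w => w.1.1 with he
        have heinj : Function.Injective e := by
          intro a b hab; exact Subtype.ext (Subtype.ext hab)
        have himg : ∑ w : ↥U, g (e w) = ∑ s ∈ Finset.univ.image e, g s :=
          (Finset.sum_image (fun a _ b _ h => heinj h)).symm
        have hcompl : ∀ s ∈ (Finset.univ.image e)ᶜ, g s ≤ 0 := by
          intro s hs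
          rw [Finset.mem_compl, Finset.mem_image] at hs
          push_neg at hs
          by_cases hsT : s ∈ CP.SfaceSet f
          · have hsne : s ≠ u.1.1 := by
              intro h
              exact hs u (Finset.mem_univ u) (by rw [he]; exact h.symm)
            have hnotU : (⟨s, hsT⟩ : ↥(CP.SfaceSet f)) ∉ U := by
              intro h
              exact hs ⟨⟨s, hsT⟩, h⟩ (Finset.mem_univ _) rfl
            have hzeroA : CP.A u.1.1 s = 0 := by
              by_contra hAne
              have hadj : G.Adj u.1 ⟨s, hsT⟩ := by
                refine ⟨fun h => hsne (congrArg Subtype.val h).symm, Or.inl hAne⟩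
              apply hnotU
              have hu2 : G.connectedComponentMk u.1 = cc :=
                (SimpleGraph.ConnectedComponent.mem_supp_iff _ _).mp u.2
              have hms : G.connectedComponentMk (⟨s, hsT⟩ : ↥(CP.SfaceSet f))
                  = G.connectedComponentMk u.1 :=
                SimpleGraph.ConnectedComponent.sound hadj.symm.reachable
              exact (SimpleGraph.ConnectedComponent.mem_supp_iff _ _).mpr (hms.trans hu2)
            rw [hg]; simp [hzeroA]
          · have hsne : u.1.1 ≠ s := fun h => hsT (h ▸ u.1.2)
            exact mul_nonpos_of_nonpos_of_nonneg (hAle u.1.1 s hsne) (hc0 s)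
        have hsplit := Finset.sum_add_sum_compl (Finset.univ.image e) g
        have hcle : ∑ s ∈ (Finset.univ.image e)ᶜ, g s ≤ 0 := Finset.sum_nonpos hcompl
        rw [hmv]
        have : ∑ w : ↥U, g (e w) = ∑ w : ↥U, g w.1.1 := rfl
        rw [← this, himg]
        linarith
      have hbridge : ¬ (0 : ℝ) ≤ lambdaPF (submat (CP.faceMatrix f) U) := by
        refine not_le.mpr ?_
        convert hUneg
        rfl
      exact hbridge hU0
    have hfinal : ∀ s, s ∉ perpSet CP.A (CP.SfaceSet f) → c s = 0 := by
      intro s hs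
      by_cases hsT : s ∈ CP.SfaceSet f
      · exact hstepC s hsT
      rw [perpSet, Set.mem_setOf_eq] at hs
      push_neg at hs
      obtain ⟨t, htT, hAst⟩ := hs
      have hts : t ≠ s := fun h => hsT (h ▸ htT)
      have hAts : CP.A t s ≠ 0 := fun h0 => hAst ((hAsym s t hts.symm).mpr h0)
      have hterm : ∀ r ∈ Finset.univ, CP.A t r * c r ≤ (0 : ℝ) := by
        intro r _
        by_cases hrT : r ∈ CP.SfaceSet f
        · rw [hstepC r hrT]; simp
        · have htr : t ≠ r := fun h => hrT (h ▸ htT)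
          exact mul_nonpos_of_nonpos_of_nonneg (hAle t r htr) (hc0 r)
      have := (Finset.sum_eq_zero_iff_of_nonpos hterm).mp (hstepB t htT) s (Finset.mem_univ s)
      rcases mul_eq_zero.mp this with h | h
      · exact absurd h hAts
      · exact h
    exact ⟨c, hc0, hfinal, hxc⟩
  refine ⟨main, ?_⟩
  intro y hy
  obtain ⟨x₀, hx₀, hfeq⟩ := hf
  have hyP : y ∈ CP.poly := by
    rw [hfeq] at hy; exact hy.1
  obtain ⟨w, hwΔ, hw0, hwy⟩ := hyP
  have hwf : Projectivization.mk ℝ w hw0 ∈ f := by rw [hwy]; exact hy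
  have hwspan : w ∈ spanFace f := Submodule.subset_span ⟨hw0, hwf⟩
  have hwcone : w ∈ CP.nonnegCone (perpSet CP.A (CP.SfaceSet f)) := main ⟨hwΔ.1, hwspan⟩
  exact ⟨w, ⟨hwcone, hwΔ.2⟩, hw0, hwy⟩
end

section
/- Let A be a Cartan matrix on a nonempty finite set S. If A is of negative (resp. zero, resp. positive) type, then there exists a vector X = (X_s)_{s∈S} ∈ ℝ^S with X_s > 0 for all s ∈ S such that (AX)_s < 0 (resp. (AX)_s = 0, resp. (AX)_s > 0) for all s ∈ S. -/
/-!
Common definitions: Cartan matrices, Vinberg's Coxeter polytopes, faces,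
the Hilbert metric and Busemann (Hausdorff) measure, reflection groups,
Vinberg domains, proximal limit sets, joins.
-/

open scoped Classical LinearAlgebra.Projectivization Pointwise ENNReal
/-! ### Auxiliary material for the proof: Perron-Frobenius theory -/

set_option linter.unusedSectionVars false
set_option linter.unnecessarySimpa false
set_option linter.unusedVariables false
set_option maxHeartbeats 1000000

noncomputable section PerronFrobenius

variable {n : Type} [Fintype n] [DecidableEq n]


lemma eval_charpoly_c (M : Matrix n n ℂ) (x : ℂ) :
    M.charpoly.eval x = (x • (1 : Matrix n n ℂ) - M).det := by
  rw [Matrix.charpoly, ← Polynomial.coe_evalRingHom, RingHom.map_det]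
  congr 1
  ext i j
  by_cases h : i = j
  · subst h; simp [Matrix.charmatrix_apply_eq, Matrix.one_apply]
  · simp [Matrix.charmatrix_apply_ne _ _ _ h, Matrix.one_apply_ne h]

lemma eig_of_root (M : Matrix n n ℂ) {μ : ℂ} (h : M.charpoly.IsRoot μ) :
    ∃ v : n → ℂ, v ≠ 0 ∧ M.mulVec v = μ • v := by
  have hdet : (μ • (1 : Matrix n n ℂ) - M).det = 0 := by
    rw [← eval_charpoly_c]; exact h
  obtain ⟨v, hv0, hv⟩ := (Matrix.exists_mulVec_eq_zero_iff).mpr hdet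
  refine ⟨v, hv0, ?_⟩
  have := hv
  rw [Matrix.sub_mulVec, sub_eq_zero, Matrix.smul_mulVec, Matrix.one_mulVec] at this
  exact this.symm

lemma root_of_eig (M : Matrix n n ℝ) {r : ℝ} {v : n → ℝ} (hv : v ≠ 0)
    (h : M.mulVec v = r • v) : (M.map fun a => (a : ℂ)).charpoly.IsRoot (r : ℂ) := by
  have hdet : (r • (1 : Matrix n n ℝ) - M).det = 0 := by
    rw [← Matrix.exists_mulVec_eq_zero_iff]
    refine ⟨v, hv, ?_⟩
    rw [Matrix.sub_mulVec, Matrix.smul_mulVec, Matrix.one_mulVec, h, sub_self]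
  have : ((r : ℂ) • (1 : Matrix n n ℂ) - M.map fun a => (a : ℂ)).det = 0 := by
    have h2 := (algebraMap ℝ ℂ).map_det (r • (1 : Matrix n n ℝ) - M)
    rw [hdet, map_zero] at h2
    rw [← h2.symm]
    congr 1
    ext i j
    by_cases hij : i = j <;>
      simp [hij, Matrix.one_apply, Matrix.map_apply, RingHom.mapMatrix_apply, Algebra.algebraMap_self]
  rw [Polynomial.IsRoot, eval_charpoly_c, this]

lemma moduli_bddAbove (M : Matrix n n ℝ) :
    BddAbove {r : ℝ | ∃ μ : ℂ, (M.map fun a => (a : ℂ)).charpoly.IsRoot μ ∧ r = ‖μ‖} := by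
  have hne : (M.map fun a => (a : ℂ)).charpoly ≠ 0 := (Matrix.charpoly_monic _).ne_zero
  have hfin : {μ : ℂ | (M.map fun a => (a : ℂ)).charpoly.IsRoot μ}.Finite :=
    Polynomial.finite_setOf_isRoot hne
  have : {r : ℝ | ∃ μ : ℂ, (M.map fun a => (a : ℂ)).charpoly.IsRoot μ ∧ r = ‖μ‖}
      = norm '' {μ : ℂ | (M.map fun a => (a : ℂ)).charpoly.IsRoot μ} := by
    ext r; simp [eq_comm, Set.mem_image]
  rw [this]
  exact (hfin.image _).bddAbove

lemma moduli_nonempty [Nonempty n] (M : Matrix n n ℝ) :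
    {r : ℝ | ∃ μ : ℂ, (M.map fun a => (a : ℂ)).charpoly.IsRoot μ ∧ r = ‖μ‖}.Nonempty := by
  have hdeg : 0 < (M.map fun a => (a : ℂ)).charpoly.degree := by
    have h1 : (M.map fun a => (a : ℂ)).charpoly.natDegree = Fintype.card n :=
      Matrix.charpoly_natDegree_eq_dim _
    have : 0 < (M.map fun a => (a : ℂ)).charpoly.natDegree := by
      rw [h1]; exact Fintype.card_pos
    exact Polynomial.natDegree_pos_iff_degree_pos.mp this
  obtain ⟨μ, hμ⟩ := Complex.exists_root hdeg
  exact ⟨‖μ‖, μ, hμ, rfl⟩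


lemma mul_nonneg_entries {M N : Matrix n n ℝ} (hM : ∀ i j, 0 ≤ M i j)
    (hN : ∀ i j, 0 ≤ N i j) : ∀ i j, 0 ≤ (M * N) i j := fun i j => by
  rw [Matrix.mul_apply]
  exact Finset.sum_nonneg fun k _ => mul_nonneg (hM i k) (hN k j)

lemma pow_nonneg_entries {M : Matrix n n ℝ} (hM : ∀ i j, 0 ≤ M i j) (k : ℕ) :
    ∀ i j, 0 ≤ (M ^ k) i j := by
  induction k with
  | zero => intro i j; by_cases h : i = j <;> simp [h, Matrix.one_apply]
  | succ k ih => rw [pow_succ]; exact mul_nonneg_entries ih hM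

lemma walk_pow_pos {G : SimpleGraph n} {B : Matrix n n ℝ} (hB : ∀ i j, 0 ≤ B i j)
    (hadj : ∀ i j, G.Adj i j → 0 < B i j) (hdiag : ∀ i, 0 < B i i) :
    ∀ (k : ℕ) (i j : n) (p : G.Walk i j), p.length ≤ k → 0 < (B ^ k) i j := by
  intro k
  induction k with
  | zero =>
    intro i j p hp
    have := SimpleGraph.Walk.eq_of_length_eq_zero (Nat.le_zero.mp hp)
    subst this
    simpa using hdiag i
  | succ k ih =>
    intro i j p hp
    rw [pow_succ', Matrix.mul_apply]
    cases p with
    | nil =>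
      exact Finset.sum_pos' (fun l _ => mul_nonneg (hB i l) (pow_nonneg_entries hB k l i))
        ⟨i, Finset.mem_univ i, mul_pos (hdiag i) (ih i i .nil (Nat.zero_le _))⟩
    | @cons _ u _ h q =>
      refine Finset.sum_pos' (fun l _ => mul_nonneg (hB i l) (pow_nonneg_entries hB k l j)) ?_
      refine ⟨u, Finset.mem_univ u, mul_pos (hadj i u h) (ih u j q ?_)⟩
      simpa using Nat.succ_le_succ_iff.mp hp

def cwF (B : Matrix n n ℝ) (x : n → ℝ) : ℝ :=
  sSup {c : ℝ | ∀ i, c * x i ≤ B.mulVec x i}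

variable {B : Matrix n n ℝ}

lemma mulVec_nonneg (hB : ∀ i j, 0 ≤ B i j) {x : n → ℝ} (hx : ∀ i, 0 ≤ x i) (i : n) :
    0 ≤ B.mulVec x i :=
  Finset.sum_nonneg fun j _ => mul_nonneg (hB i j) (hx j)

lemma cwF_set_nonempty (hB : ∀ i j, 0 ≤ B i j) {x : n → ℝ} (hx : ∀ i, 0 ≤ x i) :
    {c : ℝ | ∀ i, c * x i ≤ B.mulVec x i}.Nonempty :=
  ⟨0, fun i => by simpa using mulVec_nonneg hB hx i⟩

lemma cwF_set_bddAbove {x : n → ℝ} (hx0 : ∃ i, 0 < x i) :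
    BddAbove {c : ℝ | ∀ i, c * x i ≤ B.mulVec x i} := by
  obtain ⟨i0, hi0⟩ := hx0
  refine ⟨B.mulVec x i0 / x i0, fun c hc => ?_⟩
  rw [le_div_iff₀ hi0]
  exact hc i0

lemma le_cwF {x : n → ℝ} {c : ℝ} (hx0 : ∃ i, 0 < x i)
    (h : ∀ i, c * x i ≤ B.mulVec x i) : c ≤ cwF B x :=
  le_csSup (cwF_set_bddAbove hx0) h

lemma cwF_spec (hB : ∀ i j, 0 ≤ B i j) {x : n → ℝ} (hx : ∀ i, 0 ≤ x i)
    (hx0 : ∃ i, 0 < x i) (i : n) : cwF B x * x i ≤ B.mulVec x i := by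
  rcases eq_or_lt_of_le (hx i) with h | h
  · rw [← h, mul_zero]
    exact mulVec_nonneg hB hx i
  · rw [← le_div_iff₀ h]
    refine csSup_le (cwF_set_nonempty hB hx) fun c hc => ?_
    rw [le_div_iff₀ h]
    exact hc i

lemma cwF_nonneg (hB : ∀ i j, 0 ≤ B i j) {x : n → ℝ} (hx : ∀ i, 0 ≤ x i)
    (hx0 : ∃ i, 0 < x i) : 0 ≤ cwF B x :=
  le_cwF hx0 fun i => by simpa using mulVec_nonneg hB hx i

def simplexK (n : Type) [Fintype n] : Set (n → ℝ) :=
  {x | (∀ i, 0 ≤ x i) ∧ ∑ i, x i = 1}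

lemma simplexK_pos_coord {x : n → ℝ} (hx : x ∈ simplexK n) : ∃ i, 0 < x i := by
  by_contra h
  push_neg at h
  have : ∀ i, x i = 0 := fun i => le_antisymm (h i) (hx.1 i)
  have h1 : (∑ i, x i) = 0 := Finset.sum_eq_zero fun i _ => this i
  rw [hx.2] at h1
  norm_num at h1

lemma simplexK_coord_le_one {x : n → ℝ} (hx : x ∈ simplexK n) (i : n) : x i ≤ 1 := by
  rw [← hx.2]
  exact Finset.single_le_sum (fun j _ => hx.1 j) (Finset.mem_univ i)

lemma simplexK_compact : IsCompact (simplexK n) := by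
  have hclosed : IsClosed (simplexK n) := by
    have h1 : IsClosed {x : n → ℝ | ∀ i, 0 ≤ x i} := by
      rw [Set.setOf_forall]
      exact isClosed_iInter fun i => isClosed_le continuous_const (continuous_apply i)
    have h2 : IsClosed {x : n → ℝ | ∑ i, x i = 1} :=
      isClosed_eq (continuous_finset_sum _ fun i _ => continuous_apply i) continuous_const
    exact (h1.inter h2 : _)
  have hbdd : Bornology.IsBounded (simplexK n) := by
    rw [Metric.isBounded_iff_subset_closedBall 0]
    refine ⟨1, fun x hx => ?_⟩
    rw [Metric.mem_closedBall, dist_zero_right]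
    refine (pi_norm_le_iff_of_nonneg zero_le_one).mpr fun i => ?_
    rw [Real.norm_eq_abs, abs_of_nonneg (hx.1 i)]
    exact simplexK_coord_le_one hx i
  exact Metric.isCompact_of_isClosed_isBounded hclosed hbdd

lemma simplexK_nonempty [Nonempty n] : (simplexK n).Nonempty := by
  refine ⟨fun _ => (Fintype.card n : ℝ)⁻¹, fun i => by positivity, ?_⟩
  rw [Finset.sum_const, Finset.card_univ, nsmul_eq_mul, mul_inv_cancel₀]
  exact_mod_cast Fintype.card_ne_zero

lemma normalize_mem_simplexK {x : n → ℝ} (hx : ∀ i, 0 ≤ x i) (hx0 : ∃ i, 0 < x i) :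
    (∑ i, x i)⁻¹ • x ∈ simplexK n ∧ 0 < ∑ i, x i := by
  obtain ⟨i0, hi0⟩ := hx0
  have hσ : 0 < ∑ i, x i :=
    lt_of_lt_of_le hi0 (Finset.single_le_sum (fun j _ => hx j) (Finset.mem_univ i0))
  refine ⟨⟨fun i => mul_nonneg (inv_nonneg.mpr hσ.le) (hx i), ?_⟩, hσ⟩
  simp only [Pi.smul_apply, smul_eq_mul, ← Finset.mul_sum]
  rw [inv_mul_cancel₀ hσ.ne']

lemma cwF_bddAbove_on_simplexK (hB : ∀ i j, 0 ≤ B i j) :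
    BddAbove (cwF B '' simplexK n) := by
  refine ⟨(Fintype.card n : ℝ) * ∑ i, ∑ j, B i j, ?_⟩
  rintro - ⟨x, hx, rfl⟩
  refine csSup_le (cwF_set_nonempty hB hx.1) fun c hc => ?_
  rcases le_or_gt c 0 with h | h
  · exact h.trans (mul_nonneg (Nat.cast_nonneg _)
      (Finset.sum_nonneg fun i _ => Finset.sum_nonneg fun j _ => hB i j))
  · obtain ⟨i0, hi0⟩ := simplexK_pos_coord hx
    have h1 : c * x i0 ≤ B.mulVec x i0 := hc i0
    have h2 : B.mulVec x i0 ≤ ∑ i, ∑ j, B i j := by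
      refine le_trans (Finset.sum_le_sum fun j _ => ?_)
        (Finset.single_le_sum (f := fun i => ∑ j, B i j)
          (fun i _ => Finset.sum_nonneg fun j _ => hB i j) (Finset.mem_univ i0))
      calc B i0 j * x j ≤ B i0 j * 1 :=
            mul_le_mul_of_nonneg_left (simplexK_coord_le_one hx j) (hB i0 j)
        _ = B i0 j := mul_one _
    -- c = c * Σ x ≤ card * (c * x imax) for imax the argmax; use max coordinate
    obtain ⟨im, -, him⟩ := Finset.exists_max_image Finset.univ x ⟨i0, Finset.mem_univ i0⟩
    have hxim : 0 < x im := lt_of_lt_of_le hi0 (him i0 (Finset.mem_univ i0))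
    have hcx : c * x im ≤ ∑ i, ∑ j, B i j := (hc im).trans (by
      refine le_trans (Finset.sum_le_sum fun j _ => ?_)
        (Finset.single_le_sum (f := fun i => ∑ j, B i j)
          (fun i _ => Finset.sum_nonneg fun j _ => hB i j) (Finset.mem_univ im))
      calc B im j * x j ≤ B im j * 1 :=
            mul_le_mul_of_nonneg_left (simplexK_coord_le_one hx j) (hB im j)
        _ = B im j := mul_one _)
    have hsum : (1 : ℝ) ≤ (Fintype.card n : ℝ) * x im := by
      rw [← hx.2]
      calc ∑ i, x i ≤ ∑ _i : n, x im := Finset.sum_le_sum fun i _ => him i (Finset.mem_univ i)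
        _ = (Fintype.card n : ℝ) * x im := by simp [Finset.sum_const, Finset.card_univ, mul_comm]
    calc c = c * 1 := (mul_one c).symm
      _ ≤ c * ((Fintype.card n : ℝ) * x im) := by
          exact mul_le_mul_of_nonneg_left hsum h.le
      _ = (Fintype.card n : ℝ) * (c * x im) := by ring
      _ ≤ (Fintype.card n : ℝ) * ∑ i, ∑ j, B i j := by
          exact mul_le_mul_of_nonneg_left hcx (by positivity)

lemma mulVec_coord_continuous (B : Matrix n n ℝ) (i : n) :
    Continuous fun x : n → ℝ => B.mulVec x i := by
  simp only [Matrix.mulVec, dotProduct]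
  exact continuous_finset_sum _ fun j _ => continuous_const.mul (continuous_apply j)

lemma exists_maximizer [Nonempty n] (hB : ∀ i j, 0 ≤ B i j) :
    ∃ w ∈ simplexK n, (∀ i, sSup (cwF B '' simplexK n) * w i ≤ B.mulVec w i) ∧
      cwF B w = sSup (cwF B '' simplexK n) := by
  set r := sSup (cwF B '' simplexK n) with hr
  have hne : (cwF B '' simplexK n).Nonempty := simplexK_nonempty.image _
  have hbdd := cwF_bddAbove_on_simplexK (B := B) hB
  -- approximating sequence
  have happrox : ∀ k : ℕ, ∃ x ∈ simplexK n, r - 1 / (k + 1) < cwF B x := by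
    intro k
    have hlt : r - 1 / (k + 1) < r := by
      have : (0 : ℝ) < 1 / (k + 1) := by positivity
      linarith
    obtain ⟨y, ⟨x, hx, rfl⟩, hy⟩ := exists_lt_of_lt_csSup hne hlt
    exact ⟨x, hx, hy⟩
  choose xs hxs hxs2 using happrox
  obtain ⟨w, hw, φ, hφ, hconv⟩ := simplexK_compact.tendsto_subseq hxs
  have hkey : ∀ i, r * w i ≤ B.mulVec w i := by
    intro i
    have hφtop : Filter.Tendsto φ Filter.atTop Filter.atTop := hφ.tendsto_atTop
    have h1 : Filter.Tendsto (fun k => (r - 1 / (φ k + 1)) * xs (φ k) i)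
        Filter.atTop (nhds (r * w i)) := by
      have ha : Filter.Tendsto (fun k => r - 1 / ((φ k : ℝ) + 1)) Filter.atTop (nhds r) := by
        have := (tendsto_one_div_add_atTop_nhds_zero_nat (𝕜 := ℝ)).comp hφtop
        simpa using (tendsto_const_nhds (x := r)).sub this
      have hb : Filter.Tendsto (fun k => xs (φ k) i) Filter.atTop (nhds (w i)) :=
        ((continuous_apply i).tendsto w).comp hconv
      exact ha.mul hb
    have h2 : Filter.Tendsto (fun k => B.mulVec (xs (φ k)) i)
        Filter.atTop (nhds (B.mulVec w i)) :=
      ((mulVec_coord_continuous B i).tendsto w).comp hconv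
    refine le_of_tendsto_of_tendsto' h1 h2 fun k => ?_
    calc (r - 1 / (φ k + 1)) * xs (φ k) i ≤ cwF B (xs (φ k)) * xs (φ k) i :=
          mul_le_mul_of_nonneg_right (hxs2 (φ k)).le ((hxs (φ k)).1 i)
      _ ≤ B.mulVec (xs (φ k)) i :=
          cwF_spec hB (hxs (φ k)).1 (simplexK_pos_coord (hxs (φ k))) i
  exact ⟨w, hw, hkey, le_antisymm (le_csSup hbdd ⟨w, hw, rfl⟩)
    (le_cwF (simplexK_pos_coord hw) hkey)⟩

lemma Cpos_mulVec_pos {C : Matrix n n ℝ} (hC : ∀ i j, 0 < C i j) {x : n → ℝ}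
    (hx : ∀ i, 0 ≤ x i) (hx0 : ∃ i, 0 < x i) (i : n) : 0 < C.mulVec x i := by
  obtain ⟨j0, hj0⟩ := hx0
  exact Finset.sum_pos' (fun j _ => mul_nonneg (hC i j).le (hx j))
    ⟨j0, Finset.mem_univ j0, mul_pos (hC i j0) hj0⟩


lemma abs_le_of_eig [Nonempty n] {B : Matrix n n ℝ} (hB : ∀ i j, 0 ≤ B i j) {r : ℝ} {X : n → ℝ}
    (hXpos : ∀ i, 0 < X i) (hBX : B.mulVec X = r • X) {μ : ℂ}
    (hμ : (B.map fun t : ℝ => (t : ℂ)).charpoly.IsRoot μ) : ‖μ‖ ≤ r := by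
  obtain ⟨v, hv0, hv⟩ := eig_of_root _ hμ
  have hmain : ∀ i, ‖μ‖ * ‖v i‖ ≤ ∑ j, B i j * ‖v j‖ := by
    intro i
    have h1 : (∑ j, (B i j : ℂ) * v j) = μ * v i := by
      have := congrFun hv i
      simpa [Matrix.mulVec, dotProduct, Matrix.map_apply] using this
    calc ‖μ‖ * ‖v i‖ = ‖∑ j, (B i j : ℂ) * v j‖ := by
          rw [h1, norm_mul]
      _ = ‖∑ j, (B i j : ℂ) * v j‖ := rfl
      _ ≤ ∑ j, ‖(B i j : ℂ) * v j‖ := norm_sum_le Finset.univ _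
      _ = ∑ j, B i j * ‖v j‖ := by
          refine Finset.sum_congr rfl fun j _ => ?_
          rw [norm_mul, Complex.norm_real, Real.norm_eq_abs,
            abs_of_nonneg (hB i j)]
  obtain ⟨i0, -, hi0⟩ := Finset.exists_max_image Finset.univ
    (fun i => ‖v i‖ / X i) ⟨Classical.arbitrary n, Finset.mem_univ _⟩
  set t := ‖v i0‖ / X i0 with ht
  have htpos : 0 < t := by
    obtain ⟨i1, hi1⟩ : ∃ i, v i ≠ 0 := by
      by_contra hvv; push_neg at hvv; exact hv0 (funext hvv)
    have h2 : 0 < ‖v i1‖ / X i1 := div_pos (norm_pos_iff.mpr hi1) (hXpos i1)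
    exact lt_of_lt_of_le h2 (hi0 i1 (Finset.mem_univ i1))
  have hle : ∀ j, ‖v j‖ ≤ t * X j := fun j => by
    have := hi0 j (Finset.mem_univ j)
    rw [div_le_iff₀ (hXpos j)] at this
    linarith [this]
  have hkey : ‖μ‖ * ‖v i0‖ ≤ r * ‖v i0‖ := by
    have h3 : ‖v i0‖ = t * X i0 := by
      rw [ht, div_mul_cancel₀]
      exact (hXpos i0).ne'
    calc ‖μ‖ * ‖v i0‖ ≤ ∑ j, B i0 j * ‖v j‖ := hmain i0
      _ ≤ ∑ j, B i0 j * (t * X j) := Finset.sum_le_sum fun j _ =>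
          mul_le_mul_of_nonneg_left (hle j) (hB i0 j)
      _ = t * B.mulVec X i0 := by
          simp only [Matrix.mulVec, dotProduct]
          rw [Finset.mul_sum]
          exact Finset.sum_congr rfl fun j _ => by ring
      _ = t * (r * X i0) := by rw [hBX]; simp
      _ = r * (t * X i0) := by ring
      _ = r * ‖v i0‖ := by rw [← h3]
  have habs : 0 < ‖v i0‖ := by
    have h3 : ‖v i0‖ = t * X i0 := by
      rw [ht, div_mul_cancel₀]; exact (hXpos i0).ne'
    rw [h3]; exact mul_pos htpos (hXpos i0)
  exact le_of_mul_le_mul_right (by linarith [hkey]) habs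

theorem perron_main [Nonempty n] (B : Matrix n n ℝ) (hB : ∀ i j, 0 ≤ B i j)
    (C : Matrix n n ℝ) (hCB : C * B = B * C) (hCpos : ∀ i j, 0 < C i j) :
    ∃ X : n → ℝ, (∀ i, 0 < X i) ∧ B.mulVec X = specRad B • X := by
  obtain ⟨w, hw, hkey, hcww⟩ := exists_maximizer (B := B) hB
  set r := sSup (cwF B '' simplexK n) with hrdef
  have hbdd := cwF_bddAbove_on_simplexK (B := B) hB
  have hr0 : 0 ≤ r := (cwF_nonneg hB hw.1 (simplexK_pos_coord hw)).trans
    (le_csSup hbdd ⟨w, hw, rfl⟩)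
  -- step 1 : B w = r • w
  have hBw : B.mulVec w = r • w := by
    by_contra hne
    have hy : ∃ i, 0 < B.mulVec w i - r * w i := by
      by_contra hall
      push_neg at hall
      apply hne
      funext i
      have := hkey i
      have := hall i
      simp only [Pi.smul_apply, smul_eq_mul]
      linarith
    set u := C.mulVec w with hu
    have hupos : ∀ i, 0 < u i := fun i =>
      Cpos_mulVec_pos hCpos hw.1 (simplexK_pos_coord hw) i
    set y : n → ℝ := fun i => B.mulVec w i - r * w i with hydef
    have hynn : ∀ i, 0 ≤ y i := fun i => by have := hkey i; simp [hydef]; linarith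
    obtain ⟨i1, hi1⟩ := hy
    have hzpos : ∀ i, 0 < C.mulVec y i := fun i =>
      Cpos_mulVec_pos hCpos hynn ⟨i1, hi1⟩ i
    -- B u = r u + C y
    have hBu : ∀ i, B.mulVec u i = r * u i + C.mulVec y i := by
      have h1 : B.mulVec u = C.mulVec (B.mulVec w) := by
        rw [hu, Matrix.mulVec_mulVec, Matrix.mulVec_mulVec, hCB]
      have h2 : B.mulVec w = (r • w) + y := by
        funext i; simp [hydef]
      intro i
      rw [h1, h2]
      rw [Matrix.mulVec_add, Matrix.mulVec_smul]
      simp [hu]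
    have hstrict : ∀ i, r * u i < B.mulVec u i := fun i => by
      have := hzpos i; rw [hBu i]; linarith
    -- normalize u
    obtain ⟨hue, hσ⟩ := normalize_mem_simplexK (fun i => (hupos i).le) ⟨Classical.arbitrary n,
      hupos _⟩
    set σ := ∑ i, u i
    set u' := σ⁻¹ • u with hu'
    -- minimum ratio
    obtain ⟨i0, -, hi0min⟩ := Finset.exists_min_image Finset.univ
      (fun i => B.mulVec u i / u i) ⟨Classical.arbitrary n, Finset.mem_univ _⟩
    set c := B.mulVec u i0 / u i0 with hc
    have hcr : r < c := by
      rw [hc, lt_div_iff₀ (hupos i0)]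
      exact hstrict i0
    have hcu' : ∀ i, c * u' i ≤ B.mulVec u' i := by
      intro i
      have h1 : c ≤ B.mulVec u i / u i := hi0min i (Finset.mem_univ i)
      have h2 : c * u i ≤ B.mulVec u i := by
        rw [← le_div_iff₀ (hupos i)]; exact h1
      have : B.mulVec u' = σ⁻¹ • B.mulVec u := by rw [hu', Matrix.mulVec_smul]
      rw [this]
      simp only [hu', Pi.smul_apply, smul_eq_mul]
      calc c * (σ⁻¹ * u i) = σ⁻¹ * (c * u i) := by ring
        _ ≤ σ⁻¹ * B.mulVec u i := mul_le_mul_of_nonneg_left h2 (inv_nonneg.mpr hσ.le)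
    have : c ≤ r := (le_cwF (simplexK_pos_coord hue) hcu').trans (le_csSup hbdd ⟨u', hue, rfl⟩)
    linarith
  -- step 2 : positive eigenvector
  set X := C.mulVec w with hX
  have hXpos : ∀ i, 0 < X i := fun i => Cpos_mulVec_pos hCpos hw.1 (simplexK_pos_coord hw) i
  have hBX : B.mulVec X = r • X := by
    rw [hX, Matrix.mulVec_mulVec, ← hCB, ← Matrix.mulVec_mulVec, hBw, Matrix.mulVec_smul]
  -- step 3 : r = specRad B
  have hspec : specRad B = r := by
    refine le_antisymm ?_ ?_
    · refine csSup_le (moduli_nonempty B) ?_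
      rintro ρ ⟨μ, hμ, rfl⟩
      exact abs_le_of_eig hB hXpos hBX hμ
    · have hroot := root_of_eig B (fun h => (hXpos (Classical.arbitrary n)).ne'
        (congrFun h (Classical.arbitrary n))) hBX
      refine le_csSup (moduli_bddAbove B) ⟨(r : ℂ), hroot, ?_⟩
      simp [abs_of_nonneg hr0]
  exact ⟨X, hXpos, by rw [hspec]; exact hBX⟩

lemma cartan_eigen [Nonempty n] (M : Matrix n n ℝ) (hdiag : ∀ i, M i i = 2)
    (hoff : ∀ i j, i ≠ j → M i j ≤ 0) (hsym : ∀ i j, i ≠ j → (M i j = 0 ↔ M j i = 0))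
    (hconn : (cartanGraph M).Connected) :
    ∃ X : n → ℝ, (∀ i, 0 < X i) ∧ M.mulVec X = lambdaPF M • X := by
  set B : Matrix n n ℝ := (2 : ℝ) • (1 : Matrix n n ℝ) - M with hBdef
  have hBentry : ∀ i j, B i j = 2 * (1 : Matrix n n ℝ) i j - M i j := fun i j => rfl
  have hB : ∀ i j, 0 ≤ B i j := by
    intro i j
    rcases eq_or_ne i j with h | h
    · subst h; rw [hBentry]; simp [Matrix.one_apply, hdiag i]
    · rw [hBentry]; simp [Matrix.one_apply_ne h]; exact hoff i j h
  set C : Matrix n n ℝ := ((1 : Matrix n n ℝ) + B) ^ (Fintype.card n - 1) with hCdef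
  have hCB : C * B = B * C := (((Commute.one_left B).add_left (Commute.refl B)).pow_left _)
  have h1B : ∀ i j, 0 ≤ ((1 : Matrix n n ℝ) + B) i j := by
    intro i j
    have := hB i j
    rcases eq_or_ne i j with h | h
    · subst h; simp [Matrix.add_apply, Matrix.one_apply]; linarith
    · simp [Matrix.add_apply, Matrix.one_apply_ne h]; linarith
  have hCpos : ∀ i j, 0 < C i j := by
    intro i j
    obtain ⟨p⟩ := hconn.preconnected i j
    have hlen : p.toPath.1.length ≤ Fintype.card n - 1 := by
      have := p.toPath.2.length_lt
      omega
    refine walk_pow_pos h1B ?_ ?_ (Fintype.card n - 1) i j p.toPath.1 hlen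
    · intro a b (hab : a ≠ b ∧ (M a b ≠ 0 ∨ M b a ≠ 0))
      have hne := hab.1
      have hz : M a b ≠ 0 := by
        rcases hab.2 with h | h
        · exact h
        · exact fun h0 => h ((hsym a b hne).mp h0)
      have : B a b = -M a b := by rw [hBentry]; simp [Matrix.one_apply_ne hne]
      have h2 : 0 < B a b := by
        rw [this]
        have := hoff a b hne
        rcases lt_or_eq_of_le this with h3 | h3
        · linarith
        · exact absurd h3 hz
      rw [Matrix.add_apply, Matrix.one_apply_ne hne, zero_add]
      exact h2
    · intro a
      have : B a a = 0 := by rw [hBentry]; simp [Matrix.one_apply, hdiag a]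
      simp [Matrix.add_apply, Matrix.one_apply, this]
  obtain ⟨X, hXpos, hBX⟩ := perron_main B hB C hCB hCpos
  refine ⟨X, hXpos, ?_⟩
  have hM : M = (2 : ℝ) • (1 : Matrix n n ℝ) - B := (sub_sub_cancel _ _).symm
  have hlam : lambdaPF M = 2 - specRad B := by rw [lambdaPF, hBdef]
  rw [hlam, hM, Matrix.sub_mulVec, Matrix.smul_mulVec, Matrix.one_mulVec, hBX, sub_smul]

section Components
variable {S : Type} [Fintype S] [DecidableEq S]

lemma offcomp_zero (A : Matrix S S ℝ) {s t : S}
    (h : (cartanGraph A).connectedComponentMk s ≠ (cartanGraph A).connectedComponentMk t) :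
    A s t = 0 := by
  have hst : s ≠ t := fun he => h (by rw [he])
  by_contra hz
  exact h (SimpleGraph.ConnectedComponent.eq.mpr ⟨SimpleGraph.Walk.cons ⟨hst, Or.inl hz⟩
    SimpleGraph.Walk.nil⟩)

lemma walk_lift (A : Matrix S S ℝ) (c : (cartanGraph A).ConnectedComponent) :
    ∀ {s t : S} (p : (cartanGraph A).Walk s t) (hs : s ∈ c.supp) (ht : t ∈ c.supp),
      (cartanGraph (submat A c.supp)).Reachable ⟨s, hs⟩ ⟨t, ht⟩ := by
  intro s t p
  induction p with
  | nil => intro hs ht; rfl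
  | @cons s u t h q ih =>
    intro hs ht
    have hu : u ∈ c.supp := by
      rw [SimpleGraph.ConnectedComponent.mem_supp_iff] at hs ⊢
      rw [← hs]
      exact SimpleGraph.ConnectedComponent.eq.mpr h.symm.reachable
    have hadj : (cartanGraph (submat A c.supp)).Adj ⟨s, hs⟩ ⟨u, hu⟩ := by
      refine ⟨fun he => h.1 (congrArg Subtype.val he), ?_⟩
      exact h.2
    exact hadj.reachable.trans (ih hu ht)

lemma comp_connected (A : Matrix S S ℝ) (c : (cartanGraph A).ConnectedComponent) :
    (cartanGraph (submat A c.supp)).Connected := by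
  obtain ⟨v, hv⟩ := c.exists_rep
  have hvmem : v ∈ c.supp := by rwa [SimpleGraph.ConnectedComponent.mem_supp_iff]
  haveI : Nonempty c.supp := ⟨⟨v, hvmem⟩⟩
  constructor
  rintro ⟨s, hs⟩ ⟨t, ht⟩
  have hs' := hs
  have ht' := ht
  rw [SimpleGraph.ConnectedComponent.mem_supp_iff] at hs' ht'
  have : (cartanGraph A).Reachable s t := SimpleGraph.ConnectedComponent.eq.mp (hs'.trans ht'.symm)
  obtain ⟨p⟩ := this
  exact walk_lift A c p hs ht

lemma glue (A : Matrix S S ℝ) (hA : ∀ s, A s s = 2) (hoff : ∀ s t, s ≠ t → A s t ≤ 0)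
    (hsym : ∀ s t, s ≠ t → (A s t = 0 ↔ A t s = 0)) :
    ∃ X : S → ℝ, (∀ s, 0 < X s) ∧ ∀ s, A.mulVec X s =
      lambdaPF (submat A ((cartanGraph A).connectedComponentMk s).supp) * X s := by
  have hex : ∀ c : (cartanGraph A).ConnectedComponent,
      ∃ Y : c.supp → ℝ, (∀ i, 0 < Y i) ∧
        (submat A c.supp).mulVec Y = lambdaPF (submat A c.supp) • Y := by
    intro c
    obtain ⟨v, hv⟩ := c.exists_rep
    have hvmem : v ∈ c.supp := by rwa [SimpleGraph.ConnectedComponent.mem_supp_iff]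
    haveI : Nonempty c.supp := ⟨⟨v, hvmem⟩⟩
    refine cartan_eigen _ (fun i => hA i) (fun i j hij => hoff i j ?_)
      (fun i j hij => hsym i j ?_) (comp_connected A c)
    · exact fun he => hij (Subtype.ext he)
    · exact fun he => hij (Subtype.ext he)
  choose Y hYpos hYeig using hex
  have hcongr : ∀ (c c' : (cartanGraph A).ConnectedComponent) (h : c = c') (t : S)
      (ht : t ∈ c.supp) (ht' : t ∈ c'.supp), Y c ⟨t, ht⟩ = Y c' ⟨t, ht'⟩ := by
    rintro c c' rfl t ht ht'; rfl
  set mk := (cartanGraph A).connectedComponentMk with hmk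
  have hmem : ∀ s : S, s ∈ (mk s).supp := fun s => by
    rw [SimpleGraph.ConnectedComponent.mem_supp_iff]
  refine ⟨fun s => Y (mk s) ⟨s, hmem s⟩, fun s => hYpos _ _, ?_⟩
  intro s
  set c := mk s with hc
  set T := c.supp with hT
  -- X restricted to T equals Y c
  have hXY : ∀ u : T, Y (mk u.1) ⟨u.1, hmem u.1⟩ = Y c u := by
    intro u
    have : mk u.1 = c := (SimpleGraph.ConnectedComponent.mem_supp_iff _ _).mp u.2
    exact hcongr _ _ this u.1 _ _
  have hmemT : ∀ t : S, t ∈ T ↔ mk t = c := fun t =>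
    SimpleGraph.ConnectedComponent.mem_supp_iff _ _
  have h0 : ∀ t ∈ Finset.univ, A s t * Y (mk t) ⟨t, hmem t⟩ ≠ 0 → t ∈ T := by
    intro t _ hne0
    have hAst : A s t ≠ 0 := fun h => hne0 (by rw [h, zero_mul])
    have hcc : mk s = mk t := by
      by_contra hcc
      exact hAst (offcomp_zero A hcc)
    rw [hmemT, ← hcc, hc]
  have hsT : s ∈ T := by rw [hmemT, hc]
  have hsum : A.mulVec (fun t => Y (mk t) ⟨t, hmem t⟩) s
      = ∑ u : T, A s u.1 * Y c u := by
    calc A.mulVec (fun t => Y (mk t) ⟨t, hmem t⟩) s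
        = ∑ t : S, A s t * Y (mk t) ⟨t, hmem t⟩ := rfl
      _ = ∑ t ∈ Finset.univ.filter (fun t => t ∈ T), A s t * Y (mk t) ⟨t, hmem t⟩ :=
          (Finset.sum_filter_of_ne h0).symm
      _ = ∑ u : T, A s u.1 * Y (mk u.1) ⟨u.1, hmem u.1⟩ :=
          Finset.sum_subtype _ (fun x => by simp) _
      _ = ∑ u : T, A s u.1 * Y c u :=
          Finset.sum_congr rfl fun u _ => by rw [hXY u]
  have hsum2 : (∑ u : T, A s u.1 * Y c u) = (submat A T).mulVec (Y c) ⟨s, hsT⟩ := rfl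
  rw [hsum, hsum2, hYeig c]
  simp only [Pi.smul_apply, smul_eq_mul]
  rfl
end Components

lemma lambdaPF_irrel {m : Type} {i1 i2 : Fintype m} {d1 d2 : DecidableEq m}
    {M : Matrix m m ℝ} : @lambdaPF m i1 d1 M = @lambdaPF m i2 d2 M := by
  cases Subsingleton.elim i1 i2
  have hd : d1 = d2 := by
    funext a b
    exact Subsingleton.elim _ _
  cases hd
  rfl

end PerronFrobenius

/-- **Remark.** Let `A` be a Cartan matrix on a nonempty finite set `S`. If `A` is of
negative (resp. zero, resp. positive) type, then there is a vector `X > 0` in `ℝ^S` with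
`AX < 0` (resp. `AX = 0`, resp. `AX > 0`). -/
theorem statement_16 {S : Type} [Fintype S] [DecidableEq S] [Nonempty S]
    (A : Matrix S S ℝ) (hA : IsCartanMatrix A) :
    (IsNegType A → ∃ X : S → ℝ, (∀ s, 0 < X s) ∧ ∀ s, A.mulVec X s < 0) ∧
    (IsZeroType A → ∃ X : S → ℝ, (∀ s, 0 < X s) ∧ ∀ s, A.mulVec X s = 0) ∧
    (IsPosType A → ∃ X : S → ℝ, (∀ s, 0 < X s) ∧ ∀ s, 0 < A.mulVec X s) := by
  obtain ⟨h2, hoff, hsym, -⟩ := hA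
  obtain ⟨X, hXpos, hXeig⟩ := glue A h2 hoff hsym
  refine ⟨fun hneg => ⟨X, hXpos, fun s => ?_⟩, fun hzero => ⟨X, hXpos, fun s => ?_⟩,
    fun hpos => ⟨X, hXpos, fun s => ?_⟩⟩
  · rw [hXeig s]
    exact mul_neg_of_neg_of_pos
      (lt_of_eq_of_lt lambdaPF_irrel (hneg _ ⟨(cartanGraph A).connectedComponentMk s, rfl⟩))
      (hXpos s)
  · rw [hXeig s]
    exact mul_eq_zero_of_left
      (lambdaPF_irrel.trans (hzero _ ⟨(cartanGraph A).connectedComponentMk s, rfl⟩)) (X s)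
  · rw [hXeig s]
    exact mul_pos
      (lt_of_lt_of_eq (hpos _ ⟨(cartanGraph A).connectedComponentMk s, rfl⟩) lambdaPF_irrel)
      (hXpos s)
end
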